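/- For every natural number n ≥ 1, ∑_{i=1}^{n} (H_i² − H_i^{(2)}) = (n+1)(H_n² − H_n^{(2)}) + 2n − 2n·H_n, where H_k is the k-th harmonic number and H_k^{(2)} is the k-th harmonic number of order 2. -/

import Mathlib

open Finset

noncomputable def H (n : ℕ) : ℝ := ∑ i ∈ Finset.Icc 1 n, (1:ℝ)/i
noncomputable def H2 (n : ℕ) : ℝ := ∑ i ∈ Finset.Icc 1 n, (1:ℝ)/(i:ℝ)^2

lemma H_succ (n : ℕ) : H (n+1) = H n + 1/((n:ℝ)+1) := by
  unfold H
  rw [Finset.sum_Icc_succ_top (by omega)]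
  push_cast; ring

lemma H2_succ (n : ℕ) : H2 (n+1) = H2 n + 1/((n:ℝ)+1)^2 := by
  unfold H2
  rw [Finset.sum_Icc_succ_top (by omega)]
  push_cast; ring

theorem stmt10 (n : ℕ) (hn : 1 ≤ n) :
    ∑ i ∈ Icc 1 n, ((H i)^2 - H2 i)
      = ((n:ℝ)+1)*((H n)^2 - H2 n) + 2*(n:ℝ) - 2*(n:ℝ)*H n := by
  induction n with
  | zero => omega
  | succ n ih =>
    rcases Nat.eq_zero_or_pos n with h0 | h1
    · subst h0
      simp [H, H2]
    · rw [Finset.sum_Icc_succ_top (by omega), ih h1, H_succ, H2_succ]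
      have hpos : (n:ℝ)+1 ≠ 0 := by positivity
      push_cast
      field_simp
      ring
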